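/- Let (X,d) be the metric space X = [0,∞) with d as above (d(x,y) = 1/2^k if x ≠ y, ⌊x⌋ = ⌊y⌋ even and x,y ∈ [L_{2k}, L_{2k+1}); d = 1 for distinct points otherwise), with L_m = b_1+...+b_m, b_1 = 1, b_i = 2^{L_{i-1}}, and let f(x) = x + 1. Then for all distinct x, y ∈ (0,1), liminf_{n→∞} (1/n)#{0 ≤ i < n : d(f^i x, f^i y) < 1/2} = 0. -/

import Mathlib

open Filter Set
open scoped Classical

/-- `Lseq m = b₁ + ⋯ + b_m` where `b₁ = 1`, `b_i = 2^(b₁+⋯+b_{i-1})`;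
equivalently `Lseq 0 = 0`, `Lseq (m+1) = Lseq m + 2 ^ Lseq m`. -/
def Lseq : ℕ → ℕ
  | 0 => 0
  | m + 1 => Lseq m + 2 ^ Lseq m

/-- `bseq i = 2 ^ (L_{i-1})`, so `bseq 1 = 1`. -/
def bseq (i : ℕ) : ℕ := 2 ^ Lseq (i - 1)

/-- The three-valued distance of Example 1. -/
noncomputable def D (x y : ℝ) : ℝ :=
  if x = y then 0
  else if h : ∃ k : ℕ, ⌊x⌋ = ⌊y⌋ ∧ Even ⌊x⌋ ∧
      x ∈ Set.Ico ((Lseq (2 * k) : ℝ)) ((Lseq (2 * k + 1) : ℝ)) ∧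
      y ∈ Set.Ico ((Lseq (2 * k) : ℝ)) ((Lseq (2 * k + 1) : ℝ))
  then (1 / 2 : ℝ) ^ h.choose else 1

lemma lseq_strictMono : StrictMono Lseq := by
  apply strictMono_nat_of_lt_succ
  intro n
  have : 0 < 2 ^ Lseq n := Nat.pow_pos (by norm_num)
  show Lseq n < Lseq n + 2 ^ Lseq n
  omega

lemma lseq_le (m : ℕ) : m ≤ Lseq m := lseq_strictMono.le_apply

lemma card_filter_cast_eq (P : ℝ → Prop) (n : ℕ) :
    (Finset.filter P (do let a ← Finset.range n; pure ((a : ℝ)))).card =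
      ((Finset.range n).filter (fun a : ℕ => P a)).card := by
  have h : (do let a ← Finset.range n; pure ((a:ℝ))) =
      (Finset.range n).image (Nat.cast) := by
    simp [bind_pure_comp, Finset.image]
  rw [h, Finset.filter_image, Finset.card_image_of_injective _ Nat.cast_injective]

theorem stmt_15 :
    ∀ x ∈ Set.Ioo (0 : ℝ) 1, ∀ y ∈ Set.Ioo (0 : ℝ) 1, x ≠ y →
    Filter.liminf (fun n : ℕ =>
      (((Finset.range n).filter (fun i => D (x + i) (y + i) < 1 / 2)).card : ℝ) / n)
      Filter.atTop = 0 := by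
  intro x hx y hy hxy
  set u : ℕ → ℝ := fun n =>
      ((((Finset.range n).filter (fun a : ℕ => D (x + a) (y + a) < 1 / 2)).card : ℕ) : ℝ) / n
    with hu
  have hrw : (fun n : ℕ =>
      (((Finset.range n).filter (fun i => D (x + i) (y + i) < 1 / 2)).card : ℝ) / n) = u := by
    funext n
    rw [hu]
    congr 1
    exact_mod_cast congrArg (Nat.cast (R := ℝ))
      (card_filter_cast_eq (fun i => D (x + i) (y + i) < 1 / 2) n)
  rw [hrw]
  have hu_nonneg : ∀ n, 0 ≤ u n := fun n =>
    div_nonneg (Nat.cast_nonneg _) (Nat.cast_nonneg _)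
  have hbdd : IsBoundedUnder (· ≥ ·) atTop u :=
    isBoundedUnder_of ⟨0, fun n => hu_nonneg n⟩
  -- key counting bound
  have key : ∀ k : ℕ, u (Lseq (2 * k + 2)) ≤
      (Lseq (2 * k + 1) : ℝ) / (2 : ℝ) ^ Lseq (2 * k + 1) := by
    intro k
    set L := Lseq (2 * k + 1) with hL
    have hn : Lseq (2 * k + 2) = L + 2 ^ L := by
      show Lseq (2 * k + 1 + 1) = _; rfl
    have hsub : (Finset.range (Lseq (2 * k + 2))).filter
        (fun a : ℕ => D (x + a) (y + a) < 1 / 2) ⊆ Finset.range L := by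
      intro i hi
      simp only [Finset.mem_filter, Finset.mem_range] at hi ⊢
      obtain ⟨hin, hid⟩ := hi
      have hne : x + (i : ℝ) ≠ y + i := by
        intro h; exact hxy (by linarith)
      by_cases h : ∃ j : ℕ, ⌊x + (i:ℝ)⌋ = ⌊y + (i:ℝ)⌋ ∧ Even ⌊x + (i:ℝ)⌋ ∧
          (x + (i:ℝ)) ∈ Set.Ico ((Lseq (2 * j) : ℝ)) ((Lseq (2 * j + 1) : ℝ)) ∧
          (y + (i:ℝ)) ∈ Set.Ico ((Lseq (2 * j) : ℝ)) ((Lseq (2 * j + 1) : ℝ))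
      · obtain ⟨j, -, -, ⟨hj1, hj2⟩, -⟩ := h
        have hxi1 : ((i : ℕ) : ℝ) < (Lseq (2 * j + 1) : ℝ) := by linarith [hx.1]
        have hxi2 : (Lseq (2 * j) : ℝ) < ((i : ℕ) : ℝ) + 1 := by linarith [hx.2]
        have h1 : i < Lseq (2 * j + 1) := by exact_mod_cast hxi1
        have h2 : Lseq (2 * j) ≤ i := by
          have : (Lseq (2 * j) : ℝ) < (((i + 1 : ℕ)) : ℝ) := by push_cast; linarith
          have := Nat.cast_lt.mp this
          omega
        rcases le_or_gt (2 * j + 1) (2 * k + 1) with hle | hlt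
        · exact lt_of_lt_of_le h1 (lseq_strictMono.monotone hle)
        · exfalso
          have h3 : 2 * k + 2 ≤ 2 * j := by omega
          have h4 := lseq_strictMono.monotone h3
          omega
      · exfalso
        rw [D, if_neg hne, dif_neg h] at hid
        norm_num at hid
    have hcard : ((((Finset.range (Lseq (2 * k + 2))).filter
        (fun a : ℕ => D (x + a) (y + a) < 1 / 2)).card : ℕ) : ℝ) ≤ (L : ℝ) := by
      have := Finset.card_le_card hsub
      rw [Finset.card_range] at this
      exact_mod_cast this
    have h2L : (2 : ℝ) ^ L ≤ (Lseq (2 * k + 2) : ℝ) := by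
      rw [hn]; push_cast; linarith [Nat.cast_nonneg (α := ℝ) L]
    exact div_le_div₀ (Nat.cast_nonneg _) hcard (by positivity) h2L
  -- conclude liminf = 0
  have hle1 : ∀ n, u n ≤ 1 := by
    intro n
    rcases Nat.eq_zero_or_pos n with h0 | h0
    · simp [hu, h0]
    · rw [hu]
      apply div_le_one_of_le₀
      · exact_mod_cast (Finset.card_filter_le _ _).trans (le_of_eq (Finset.card_range n))
      · positivity
  have hcobdd : IsCoboundedUnder (· ≥ ·) atTop u :=
    (isBoundedUnder_of ⟨1, fun n => hle1 n⟩ :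
      IsBoundedUnder (· ≤ ·) atTop u).isCoboundedUnder_ge
  refine le_antisymm ?_ (le_liminf_of_le hcobdd
    (Eventually.of_forall hu_nonneg))
  have hto : Tendsto (fun m : ℕ => (m : ℝ) * (1 / 2 : ℝ) ^ m) atTop (nhds 0) :=
    tendsto_self_mul_const_pow_of_lt_one (by norm_num) (by norm_num)
  refine le_of_forall_pos_le_add ?_
  intro ε hε
  rw [zero_add]
  refine liminf_le_of_frequently_le ?_ hbdd
  rw [frequently_atTop]
  intro a
  obtain ⟨N, hN⟩ := (Metric.tendsto_atTop.mp hto ε hε)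
  set k := max a N with hk
  refine ⟨Lseq (2 * k + 2), le_trans ?_ (lseq_le _), ?_⟩
  · omega
  · have hLN : N ≤ Lseq (2 * k + 1) := by
      have := lseq_le (2 * k + 1); omega
    have := hN (Lseq (2 * k + 1)) hLN
    rw [Real.dist_eq, sub_zero] at this
    have habs : (Lseq (2 * k + 1) : ℝ) * (1 / 2 : ℝ) ^ Lseq (2 * k + 1) ≤ ε := by
      have h0 : 0 ≤ (Lseq (2 * k + 1) : ℝ) * (1 / 2 : ℝ) ^ Lseq (2 * k + 1) := by positivity
      calc _ ≤ |(Lseq (2 * k + 1) : ℝ) * (1 / 2 : ℝ) ^ Lseq (2 * k + 1)| := le_abs_self _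
        _ ≤ ε := le_of_lt this
    refine le_trans (key k) ?_
    rw [div_eq_mul_inv, ← inv_pow, ← one_div]
    exact habs
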